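/- Let C > 0, T > 0, and let Y : [0,T] → ℝ be a continuous function with Y(t) > 0 for all t ∈ [0,T] which satisfies the integral inequality Y(t) ≤ Y(0) + C ∫₀^t Y(s)³ ds for all t ∈ [0,T]. If T < 1/(2 C Y(0)²), then for every t ∈ [0,T] one has Y(t)² ≤ Y(0)² / (1 − 2 C Y(0)² t). -/

import Mathlib

open MeasureTheory

theorem stmt13 (C T : ℝ) (hC : 0 < C) (hT : 0 < T) (Y : ℝ → ℝ)
    (hYc : ContinuousOn Y (Set.Icc 0 T))
    (hYpos : ∀ t ∈ Set.Icc (0:ℝ) T, 0 < Y t)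
    (hY : ∀ t ∈ Set.Icc (0:ℝ) T, Y t ≤ Y 0 + C * ∫ s in (0:ℝ)..t, Y s ^ 3)
    (hTsmall : T < 1 / (2 * C * Y 0 ^ 2)) :
    ∀ t ∈ Set.Icc (0:ℝ) T, Y t ^ 2 ≤ Y 0 ^ 2 / (1 - 2 * C * Y 0 ^ 2 * t) := by
  have h0T : (0:ℝ) ∈ Set.Icc (0:ℝ) T := ⟨le_refl 0, hT.le⟩
  have hY0 : 0 < Y 0 := hYpos 0 h0T
  -- extend Y continuously to ℝ
  set f : ℝ → ℝ := fun x => Y ((Set.projIcc 0 T hT.le x : Set.Icc (0:ℝ) T) : ℝ) with hfdef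
  have hfc : Continuous f := by
    apply hYc.comp_continuous
    · exact continuous_subtype_val.comp (continuous_projIcc)
    · intro x; exact (Set.projIcc 0 T hT.le x).2
  have hfeq : ∀ x ∈ Set.Icc (0:ℝ) T, f x = Y x := by
    intro x hx
    simp [hfdef, Set.projIcc_of_mem hT.le hx]
  have hf3c : Continuous (fun x => f x ^ 3) := hfc.pow 3
  set Z : ℝ → ℝ := fun u => Y 0 + C * ∫ s in (0:ℝ)..u, f s ^ 3 with hZdef
  have hZderiv : ∀ u : ℝ, HasDerivAt Z (C * f u ^ 3) u := by
    intro u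
    have h1 : HasDerivAt (fun v => ∫ s in (0:ℝ)..v, f s ^ 3) (f u ^ 3) u := by
      apply intervalIntegral.integral_hasDerivAt_right
        (hf3c.intervalIntegrable 0 u)
        hf3c.aestronglyMeasurable.stronglyMeasurableAtFilter
        hf3c.continuousAt
    exact (h1.const_mul C).const_add (Y 0)
  have hZeq : ∀ u ∈ Set.Icc (0:ℝ) T, (∫ s in (0:ℝ)..u, f s ^ 3) = ∫ s in (0:ℝ)..u, Y s ^ 3 := by
    intro u hu
    apply intervalIntegral.integral_congr
    intro x hx
    rw [Set.uIcc_of_le hu.1] at hx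
    have : x ∈ Set.Icc (0:ℝ) T := ⟨hx.1, hx.2.trans hu.2⟩
    simp [hfeq x this]
  have hYZ : ∀ u ∈ Set.Icc (0:ℝ) T, Y u ≤ Z u := by
    intro u hu
    rw [hZdef]; simp only; rw [hZeq u hu]
    exact hY u hu
  have hZpos : ∀ u ∈ Set.Icc (0:ℝ) T, 0 < Z u := fun u hu =>
    lt_of_lt_of_le (hYpos u hu) (hYZ u hu)
  -- g is monotone on Icc
  set g : ℝ → ℝ := fun u => (Z u ^ 2)⁻¹ + 2 * C * u with hgdef
  have hZc : Continuous Z := by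
    have : Continuous fun v => ∫ s in (0:ℝ)..v, f s ^ 3 :=
      intervalIntegral.continuous_primitive (fun a b => hf3c.intervalIntegrable a b) 0
    continuity
  have hgc : ContinuousOn g (Set.Icc 0 T) := by
    apply ContinuousOn.add _ ((continuous_const.mul continuous_id).continuousOn)
    apply ContinuousOn.inv₀ ((hZc.pow 2).continuousOn)
    intro x hx
    exact pow_ne_zero 2 (hZpos x hx).ne'
  have hgd : ∀ u ∈ Set.Ioo (0:ℝ) T, HasDerivAt g
      (-(2 * Z u * (C * f u ^ 3)) / (Z u ^ 2) ^ 2 + 2 * C) u := by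
    intro u hu
    have hZu : Z u ^ 2 ≠ 0 := pow_ne_zero 2 (hZpos u (Set.Ioo_subset_Icc_self hu)).ne'
    have h1 : HasDerivAt (fun v => (Z v ^ 2)⁻¹)
        (-(2 * Z u * (C * f u ^ 3)) / (Z u ^ 2) ^ 2) u := by
      have := (((hZderiv u).pow 2).inv hZu)
      refine this.congr_deriv ?_
      norm_num [Pi.pow_apply]
    have h2 : HasDerivAt (fun v : ℝ => 2 * C * v) (2 * C) u := by
      simpa using (hasDerivAt_id u).const_mul (2 * C)
    exact h1.add h2
  have hgmono : MonotoneOn g (Set.Icc 0 T) := by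
    apply monotoneOn_of_deriv_nonneg (convex_Icc 0 T) hgc
    · intro x hx
      rw [interior_Icc] at hx
      exact (hgd x hx).differentiableAt.differentiableWithinAt
    · intro x hx
      rw [interior_Icc] at hx
      rw [(hgd x hx).deriv]
      have hxI : x ∈ Set.Icc (0:ℝ) T := Set.Ioo_subset_Icc_self hx
      have hYx : 0 < Y x := hYpos x hxI
      have hZx : 0 < Z x := hZpos x hxI
      have hle : Y x ≤ Z x := hYZ x hxI
      have hfx : f x = Y x := hfeq x hxI
      rw [hfx]
      have hY3 : Y x ^ 3 ≤ Z x ^ 3 := pow_le_pow_left₀ hYx.le hle 3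
      have key : 2 * Z x * (C * Y x ^ 3) ≤ 2 * C * (Z x ^ 2) ^ 2 := by
        have h6 := mul_le_mul_of_nonneg_left hY3 (by positivity : (0:ℝ) ≤ 2 * C * Z x)
        nlinarith [h6]
      have h4 : (0:ℝ) < (Z x ^ 2) ^ 2 := by positivity
      have h5 : 2 * Z x * (C * Y x ^ 3) / (Z x ^ 2) ^ 2 ≤ 2 * C :=
        (div_le_iff₀ h4).mpr key
      rw [neg_div]
      linarith
  intro t ht
  have hg0 : g 0 ≤ g t := hgmono h0T ht ht.1
  have hZ0 : Z 0 = Y 0 := by simp [hZdef]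
  have hD : 0 < 1 - 2 * C * Y 0 ^ 2 * t := by
    have h1 : 2 * C * Y 0 ^ 2 * t ≤ 2 * C * Y 0 ^ 2 * T :=
      mul_le_mul_of_nonneg_left ht.2 (by positivity)
    have h2 := (lt_div_iff₀ (by positivity : (0:ℝ) < 2 * C * Y 0 ^ 2)).mp hTsmall
    nlinarith [h1, h2]
  have hZt : 0 < Z t := hZpos t ht
  have hZt2 : (0:ℝ) < Z t ^ 2 := by positivity
  have hinv : (Y 0 ^ 2)⁻¹ - 2 * C * t ≤ (Z t ^ 2)⁻¹ := by
    simp only [hgdef, hZ0, mul_zero, add_zero] at hg0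
    linarith
  rw [le_div_iff₀ hD]
  have hYt : Y t ^ 2 ≤ Z t ^ 2 := pow_le_pow_left₀ (hYpos t ht).le (hYZ t ht) 2
  have hkey : (1 - 2 * C * Y 0 ^ 2 * t) * Z t ^ 2 ≤ Y 0 ^ 2 := by
    have h3 := mul_le_mul_of_nonneg_left hinv
      (by positivity : (0:ℝ) ≤ Z t ^ 2 * Y 0 ^ 2)
    have e1 : Z t ^ 2 * Y 0 ^ 2 * ((Y 0 ^ 2)⁻¹ - 2 * C * t)
        = Z t ^ 2 - 2 * C * t * (Z t ^ 2 * Y 0 ^ 2) := by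
      field_simp
    have e2 : Z t ^ 2 * Y 0 ^ 2 * (Z t ^ 2)⁻¹ = Y 0 ^ 2 := by
      field_simp
    rw [e1, e2] at h3
    have e3 : (1 - 2 * C * Y 0 ^ 2 * t) * Z t ^ 2
        = Z t ^ 2 - 2 * C * t * (Z t ^ 2 * Y 0 ^ 2) := by ring
    rw [e3]
    exact h3
  calc Y t ^ 2 * (1 - 2 * C * Y 0 ^ 2 * t)
      ≤ Z t ^ 2 * (1 - 2 * C * Y 0 ^ 2 * t) :=
        mul_le_mul_of_nonneg_right hYt hD.le
    _ = (1 - 2 * C * Y 0 ^ 2 * t) * Z t ^ 2 := mul_comm _ _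
    _ ≤ Y 0 ^ 2 := hkey
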